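/- Let n be a positive natural, A : Fin n → Fin n → ℝ with A_{ij} ∈ {0, 1} for all i, j, let d : Fin n → Fin n → ℝ with d_{ij} > 0 for all i, j, and let ε ∈ (0, 1). Then the CNE energy is bounded above by the Bernoulli log-likelihood up to an additive constant: Σ_{ij} A_{ij} log(1/(1 + d_{ij}²)) + ε Σ_{ij} (1 − A_{ij}) log(1 − 1/(1 + d_{ij}²)) ≤ Σ_{ij} A_{ij} log(ε/(1 + d_{ij}²)) + Σ_{ij} (1 − A_{ij}) log(1 − ε/(1 + d_{ij}²)) − (Σ_{ij} A_{ij}) · log ε. -/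
import Mathlib


open Finset

/-- The CNE energy is bounded above by the Bernoulli log-likelihood up to an additive
constant: for a 0/1 adjacency matrix `A`, positive distances `d`, and `ε ∈ (0, 1)`,
`∑ᵢⱼ Aᵢⱼ log (1/(1+dᵢⱼ²)) + ε ∑ᵢⱼ (1-Aᵢⱼ) log (1 - 1/(1+dᵢⱼ²))
  ≤ ∑ᵢⱼ Aᵢⱼ log (ε/(1+dᵢⱼ²)) + ∑ᵢⱼ (1-Aᵢⱼ) log (1 - ε/(1+dᵢⱼ²)) - (∑ᵢⱼ Aᵢⱼ) log ε`. -/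
theorem cne_energy_le_bernoulli_loglik
    (n : ℕ) (hn : 0 < n)
    (A : Fin n → Fin n → ℝ) (hA : ∀ i j, A i j = 0 ∨ A i j = 1)
    (d : Fin n → Fin n → ℝ) (hd : ∀ i j, 0 < d i j)
    (ε : ℝ) (hε0 : 0 < ε) (hε1 : ε < 1) :
    (∑ i, ∑ j, A i j * Real.log (1 / (1 + d i j ^ 2)))
        + ε * ∑ i, ∑ j, (1 - A i j) * Real.log (1 - 1 / (1 + d i j ^ 2))
      ≤ (∑ i, ∑ j, A i j * Real.log (ε / (1 + d i j ^ 2)))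
          + (∑ i, ∑ j, (1 - A i j) * Real.log (1 - ε / (1 + d i j ^ 2)))
          - (∑ i, ∑ j, A i j) * Real.log ε := by
  -- key concavity lemma: ε * log (1 - p) ≤ log (1 - ε * p) for p ∈ (0,1)
  have key : ∀ p : ℝ, 0 < p → p < 1 → ε * Real.log (1 - p) ≤ Real.log (1 - ε * p) := by
    intro p hp0 hp1
    have h1 : (1 : ℝ) - p ∈ Set.Ioi (0 : ℝ) := by simp [Set.mem_Ioi]; linarith
    have h2 : (1 : ℝ) ∈ Set.Ioi (0 : ℝ) := by norm_num
    have := (strictConcaveOn_log_Ioi.concaveOn).2 h1 h2 (le_of_lt hε0)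
      (by linarith : (0:ℝ) ≤ 1 - ε) (by ring)
    simp only [smul_eq_mul, mul_one, Real.log_one, mul_zero, add_zero] at this
    have heq : ε * (1 - p) + (1 - ε) = 1 - ε * p := by ring
    rwa [heq] at this
  -- the A-terms cancel
  have hx : ∀ i j : Fin n, (0:ℝ) < 1 + d i j ^ 2 := fun i j => by nlinarith [hd i j, sq_nonneg (d i j)]
  have hcancel : ∀ i j : Fin n,
      A i j * Real.log (ε / (1 + d i j ^ 2))
        = A i j * Real.log (1 / (1 + d i j ^ 2)) + A i j * Real.log ε := by
    intro i j
    rw [Real.log_div (ne_of_gt hε0) (ne_of_gt (hx i j)),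
        Real.log_div one_ne_zero (ne_of_gt (hx i j)), Real.log_one]
    ring
  have hsum : (∑ i, ∑ j, A i j * Real.log (ε / (1 + d i j ^ 2)))
      = (∑ i, ∑ j, A i j * Real.log (1 / (1 + d i j ^ 2)))
        + (∑ i, ∑ j, A i j) * Real.log ε := by
    rw [Finset.sum_mul]
    rw [← Finset.sum_add_distrib]
    refine Finset.sum_congr rfl fun i _ => ?_
    rw [Finset.sum_mul, ← Finset.sum_add_distrib]
    exact Finset.sum_congr rfl fun j _ => hcancel i j
  rw [hsum]
  have hmain : ε * ∑ i, ∑ j, (1 - A i j) * Real.log (1 - 1 / (1 + d i j ^ 2))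
      ≤ ∑ i, ∑ j, (1 - A i j) * Real.log (1 - ε / (1 + d i j ^ 2)) := by
    rw [Finset.mul_sum]
    refine Finset.sum_le_sum fun i _ => ?_
    rw [Finset.mul_sum]
    refine Finset.sum_le_sum fun j _ => ?_
    rcases hA i j with h | h
    · have hp0 : (0:ℝ) < 1 / (1 + d i j ^ 2) := by positivity
      have hp1 : 1 / (1 + d i j ^ 2) < 1 := by
        rw [div_lt_one (hx i j)]; nlinarith [hd i j]
      have := key _ hp0 hp1
      have heq : 1 - ε * (1 / (1 + d i j ^ 2)) = 1 - ε / (1 + d i j ^ 2) := by ring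
      rw [heq] at this
      simp only [h, sub_zero, one_mul]
      linarith
    · simp [h]
  linarith
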